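/- Let X be a Hausdorff locally convex topological vector space over ℂ with the countable neighbourhood property: for every sequence (α_j)_j of continuous seminorms on X there exist a continuous seminorm α on X and positive scalars (λ_j)_j with α_j(x) ≤ λ_j α(x) for all j and all x ∈ X. Let (x_n)_{n≥1} be a sequence in X such that for every continuous linear functional x' on X there exists k ∈ ℕ with sup_n n^{−k} |x'(x_n)| < ∞. Then there exists k₀ ∈ ℕ such that sup_n n^{−k₀} α(x_n) < ∞ for every continuous seminorm α on X. -/

import Mathlib

open Filter Finset Topology

section Aux

/-- Hahn–Banach dual vector in a seminormed space. -/
lemma exists_dual_seminormed {E : Type*} [SeminormedAddCommGroup E] [NormedSpace ℂ E] (v : E) :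
    ∃ F : E →L[ℂ] ℂ, ‖F‖ ≤ 1 ∧ F v = (‖v‖ : ℂ) := by
  have H : ∀ c : ℂ, c • v = 0 → c • ((‖v‖ : ℝ) : ℂ) = 0 := by
    intro c hc
    have h0 : ‖c • v‖ = 0 := by rw [hc, norm_zero]
    rw [norm_smul] at h0
    rcases mul_eq_zero.1 h0 with h | h
    · rw [norm_eq_zero.mp h, zero_smul]
    · rw [h]; simp
  set g := LinearPMap.mkSpanSingleton' (σ := RingHom.id ℂ) v ((‖v‖ : ℝ) : ℂ) H with hg
  have hbound : ∀ z : g.domain, ‖g z‖ ≤ 1 * ‖(z : E)‖ := by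
    rintro ⟨z, hz⟩
    have hz' : z ∈ (ℂ ∙ v) := by
      rw [hg, LinearPMap.domain_mkSpanSingleton] at hz
      exact hz
    obtain ⟨c, rfl⟩ := Submodule.mem_span_singleton.mp hz'
    rw [LinearPMap.mkSpanSingleton'_apply]
    rw [norm_smul, norm_smul, one_mul]
    simp [abs_of_nonneg (norm_nonneg v)]
  set f₀ : g.domain →L[ℂ] ℂ := LinearMap.mkContinuous g.toFun 1 hbound with hf₀
  obtain ⟨F, hFe, hFn⟩ := exists_extension_norm_eq g.domain f₀
  have hv : v ∈ g.domain := by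
    rw [hg, LinearPMap.domain_mkSpanSingleton]
    exact Submodule.mem_span_singleton_self v
  refine ⟨F, ?_, ?_⟩
  · rw [hFn]
    exact LinearMap.mkContinuous_norm_le g.toFun zero_le_one hbound
  · have h1 : F v = f₀ ⟨v, hv⟩ := hFe ⟨v, hv⟩
    rw [h1]
    have h2 : f₀ ⟨v, hv⟩ = g ⟨v, hv⟩ := rfl
    rw [h2, LinearPMap.mkSpanSingleton'_apply_self]

/-- Baire category argument in the dual of a seminormed space. -/
lemma baire_dual_bound {E : Type*} [SeminormedAddCommGroup E] [NormedSpace ℂ E] (y : ℕ → E)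
    (h : ∀ f : E →L[ℂ] ℂ, ∃ k : ℕ, ∃ C : ℝ, ∀ n : ℕ, ‖f (y n)‖ ≤ C * ((n + 1 : ℕ) : ℝ) ^ k) :
    ∃ k : ℕ, ∃ C : ℝ, ∀ n : ℕ, ‖y n‖ ≤ C * ((n + 1 : ℕ) : ℝ) ^ k := by
  set S : ℕ → Set (E →L[ℂ] ℂ) :=
    fun m => {f | ∀ n : ℕ, ‖f (y n)‖ ≤ (m : ℝ) * ((n + 1 : ℕ) : ℝ) ^ m} with hS
  have hpow : ∀ n k : ℕ, (0 : ℝ) < ((n + 1 : ℕ) : ℝ) ^ k := by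
    intro n k
    positivity
  have hSclosed : ∀ m, IsClosed (S m) := by
    intro m
    have : S m = ⋂ n : ℕ,
        {f : E →L[ℂ] ℂ | ‖f (y n)‖ ≤ (m : ℝ) * ((n + 1 : ℕ) : ℝ) ^ m} := by
      ext f; simp [hS, Set.mem_iInter]
    rw [this]
    refine isClosed_iInter fun n => isClosed_le ?_ continuous_const
    exact ((ContinuousLinearMap.apply ℂ ℂ (y n)).continuous).norm
  have hcover : (⋃ m, S m) = Set.univ := by
    refine Set.eq_univ_of_forall fun f => ?_
    obtain ⟨k, C, hkC⟩ := h f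
    refine Set.mem_iUnion.mpr ⟨k + ⌈C⌉₊, fun n => ?_⟩
    refine (hkC n).trans ?_
    have h1 : (1 : ℝ) ≤ ((n + 1 : ℕ) : ℝ) := by exact_mod_cast Nat.one_le_iff_ne_zero.mpr (by omega)
    refine mul_le_mul ?_ (pow_le_pow_right₀ h1 (by omega)) (le_of_lt (hpow n k)) (by positivity)
    calc C ≤ (⌈C⌉₊ : ℝ) := Nat.le_ceil C
      _ ≤ ((k + ⌈C⌉₊ : ℕ) : ℝ) := by exact_mod_cast Nat.le_add_left _ _
  obtain ⟨m, f₀, hf₀⟩ := nonempty_interior_of_iUnion_of_closed hSclosed hcover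
  have hmem : S m ∈ 𝓝 f₀ := mem_interior_iff_mem_nhds.mp hf₀
  obtain ⟨ε, hε, hball⟩ := Metric.mem_nhds_iff.mp hmem
  have hf₀S : f₀ ∈ S m := interior_subset hf₀
  refine ⟨m, 4 * m / ε, fun n => ?_⟩
  obtain ⟨F, hF1, hFv⟩ := exists_dual_seminormed (y n)
  set g : E →L[ℂ] ℂ := f₀ + ((ε / 2 : ℝ) : ℂ) • F with hgdef
  have hgmem : g ∈ Metric.ball f₀ ε := by
    rw [Metric.mem_ball, dist_eq_norm]
    have h1 : g - f₀ = ((ε / 2 : ℝ) : ℂ) • F := by rw [hgdef]; abel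
    rw [h1]
    have h2 : ‖((ε / 2 : ℝ) : ℂ) • F‖ ≤ ‖((ε / 2 : ℝ) : ℂ)‖ * ‖F‖ := ContinuousLinearMap.opNorm_smul_le _ _
    have h3 : ‖((ε / 2 : ℝ) : ℂ)‖ = ε / 2 := by
      rw [Complex.norm_real, Real.norm_of_nonneg (by linarith)]
    rw [h3] at h2
    nlinarith [norm_nonneg F]
  have hgS : g ∈ S m := hball hgmem
  have hgn := hgS n
  have hf₀n := hf₀S n
  have hcomp : g (y n) - f₀ (y n) = ((ε / 2 : ℝ) : ℂ) * (‖y n‖ : ℂ) := by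
    rw [hgdef]
    simp [hFv]
  have hnorm : ε / 2 * ‖y n‖ = ‖g (y n) - f₀ (y n)‖ := by
    rw [hcomp, norm_mul, Complex.norm_real, Complex.norm_real,
      Real.norm_of_nonneg (by linarith : (0:ℝ) ≤ ε / 2),
      Real.norm_of_nonneg (norm_nonneg _)]
  have hle : ε / 2 * ‖y n‖ ≤ 2 * ((m : ℝ) * ((n + 1 : ℕ) : ℝ) ^ m) := by
    rw [hnorm]
    calc ‖g (y n) - f₀ (y n)‖ ≤ ‖g (y n)‖ + ‖f₀ (y n)‖ := norm_sub_le _ _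
      _ ≤ 2 * ((m : ℝ) * ((n + 1 : ℕ) : ℝ) ^ m) := by linarith
  rw [div_mul_eq_mul_div, le_div_iff₀ hε]
  nlinarith [norm_nonneg (y n), hpow n m]

/-- Ambient space: `X` equipped with the seminormed structure of `α`. -/
@[nolint unusedArguments]
def AmbientSpace {X : Type*} [AddCommGroup X] [Module ℂ X] (_α : Seminorm ℂ X) : Type _ := X

variable {X : Type*} [AddCommGroup X] [Module ℂ X] (α : Seminorm ℂ X)

instance : AddCommGroup (AmbientSpace α) := inferInstanceAs (AddCommGroup X)
instance : Module ℂ (AmbientSpace α) := inferInstanceAs (Module ℂ X)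
noncomputable instance : SeminormedAddCommGroup (AmbientSpace α) :=
  { (α.toAddGroupSeminorm : AddGroupSeminorm (AmbientSpace α)).toSeminormedAddCommGroup with
    toAddCommGroup := instAddCommGroupAmbientSpace α }
noncomputable instance : NormedSpace ℂ (AmbientSpace α) :=
  ⟨fun c z => le_of_eq (map_smul_eq_mul α c z)⟩

/-- The identity map from `X` to the ambient space. -/
def toAmb : X → AmbientSpace α := id

lemma norm_toAmb (z : X) : ‖toAmb α z‖ = α z := rfl

end Aux

/-- Lemma on the countable neighbourhood property: if a sequence `(xₙ)` in a Hausdorff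
locally convex space `X` with the countable neighbourhood property is such that for every
continuous linear functional `x'` there is `k` with `supₙ n^{-k} |x'(xₙ)| < ∞`, then there
is `k₀` with `supₙ n^{-k₀} α(xₙ) < ∞` for every continuous seminorm `α`. -/
theorem cnp_uniform_polynomial_bound
    {X : Type*} [AddCommGroup X] [Module ℂ X] [TopologicalSpace X] [IsTopologicalAddGroup X]
    [ContinuousSMul ℂ X] [T2Space X] [Module ℝ X] [IsScalarTower ℝ ℂ X]
    [LocallyConvexSpace ℝ X]
    (hcnp : ∀ αs : ℕ → Seminorm ℂ X, (∀ j, Continuous (αs j)) →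
      ∃ (α : Seminorm ℂ X) (lam : ℕ → ℝ), Continuous α ∧ (∀ j, 0 < lam j) ∧
        ∀ j, ∀ y : X, αs j y ≤ lam j * α y)
    (x : ℕ → X)
    (h : ∀ x' : X →L[ℂ] ℂ, ∃ k : ℕ, ∃ C : ℝ,
      ∀ n : ℕ, (((n + 1 : ℕ) : ℝ) ^ k)⁻¹ * ‖x' (x (n + 1))‖ ≤ C) :
    ∃ k₀ : ℕ, ∀ α : Seminorm ℂ X, Continuous α → ∃ C : ℝ,
      ∀ n : ℕ, (((n + 1 : ℕ) : ℝ) ^ k₀)⁻¹ * α (x (n + 1)) ≤ C := by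
  have hpow : ∀ n k : ℕ, (0 : ℝ) < ((n + 1 : ℕ) : ℝ) ^ k := by
    intro n k; positivity
  by_contra hcon
  push_neg at hcon
  choose αs hαs hbig using hcon
  obtain ⟨α, lam, hαc, hlam, hle⟩ := hcnp αs hαs
  -- the single seminorm α is unbounded for every k
  have hαbig : ∀ k : ℕ, ∀ C : ℝ, ∃ n : ℕ,
      C < (((n + 1 : ℕ) : ℝ) ^ k)⁻¹ * α (x (n + 1)) := by
    intro k C
    obtain ⟨n, hn⟩ := hbig k (lam k * C)
    refine ⟨n, ?_⟩
    have h1 : (((n + 1 : ℕ) : ℝ) ^ k)⁻¹ * αs k (x (n + 1)) ≤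
        lam k * ((((n + 1 : ℕ) : ℝ) ^ k)⁻¹ * α (x (n + 1))) := by
      have := hle k (x (n + 1))
      have hinv : (0 : ℝ) ≤ (((n + 1 : ℕ) : ℝ) ^ k)⁻¹ := le_of_lt (inv_pos.mpr (hpow n k))
      calc (((n + 1 : ℕ) : ℝ) ^ k)⁻¹ * αs k (x (n + 1))
          ≤ (((n + 1 : ℕ) : ℝ) ^ k)⁻¹ * (lam k * α (x (n + 1))) :=
            mul_le_mul_of_nonneg_left this hinv
        _ = lam k * ((((n + 1 : ℕ) : ℝ) ^ k)⁻¹ * α (x (n + 1))) := by ring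
    have h2 : lam k * C < lam k * ((((n + 1 : ℕ) : ℝ) ^ k)⁻¹ * α (x (n + 1))) :=
      lt_of_lt_of_le hn h1
    exact lt_of_mul_lt_mul_left h2 (le_of_lt (hlam k))
  -- apply the Baire argument in the seminormed space (X, α)
  set y : ℕ → AmbientSpace α := fun n => toAmb α (x (n + 1)) with hy
  have hdual : ∀ f : AmbientSpace α →L[ℂ] ℂ, ∃ k : ℕ, ∃ C : ℝ,
      ∀ n : ℕ, ‖f (y n)‖ ≤ C * ((n + 1 : ℕ) : ℝ) ^ k := by
    intro f
    -- f is continuous for the original topology of X since α is continuous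
    have hb : ∀ z : X, ‖f (toAmb α z)‖ ≤ ‖f‖ * α z := by
      intro z
      have := f.le_opNorm (toAmb α z)
      rwa [norm_toAmb] at this
    have hlin : IsLinearMap ℂ fun z : X => f (toAmb α z) :=
      ⟨fun a b => by exact f.map_add a b, fun c a => by exact f.map_smul c a⟩
    have hcont : Continuous hlin.mk' := by
      refine continuous_of_continuousAt_zero hlin.mk' ?_
      have hg : Tendsto (fun z : X => ‖f‖ * α z) (𝓝 0) (𝓝 0) := by
        have hc : Continuous fun z : X => ‖f‖ * α z := continuous_const.mul hαc
        have := hc.tendsto (0 : X)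
        simpa [map_zero] using this
      have h0 : Tendsto (fun z : X => f (toAmb α z)) (𝓝 0) (𝓝 0) :=
        squeeze_zero_norm hb hg
      unfold ContinuousAt
      rw [map_zero]
      exact h0
    set x' : X →L[ℂ] ℂ := ⟨hlin.mk', hcont⟩ with hx'
    obtain ⟨k, C, hkC⟩ := h x'
    refine ⟨k, C, fun n => ?_⟩
    have hthis := hkC n
    have hx'v : x' (x (n + 1)) = f (y n) := rfl
    rw [hx'v, inv_mul_le_iff₀ (hpow n k)] at hthis
    calc ‖f (y n)‖ ≤ ((n + 1 : ℕ) : ℝ) ^ k * C := hthis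
      _ = C * ((n + 1 : ℕ) : ℝ) ^ k := mul_comm _ _
  obtain ⟨k, C, hkC⟩ := baire_dual_bound y hdual
  obtain ⟨n, hn⟩ := hαbig k C
  have hkn := hkC n
  rw [hy] at hkn
  rw [norm_toAmb] at hkn
  have : (((n + 1 : ℕ) : ℝ) ^ k)⁻¹ * α (x (n + 1)) ≤ C := by
    rw [inv_mul_le_iff₀ (hpow n k)] at *
    linarith [hkn]
  linarith
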